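/- Define A(x) = diag(e^{λ(x)}, e^{−λ(x)}) with λ(x) = e^{2πi q₀ x} for a positive integer q₀. Then for α = p/q rational with q dividing q₀, L(α, A_ε) = (2/π) e^{−2π q₀ ε}, while for all other α (in particular all irrational α), L(α, A_ε) = 0, for every ε ∈ ℝ. In particular the Lyapunov exponent (α, ε fixed > 0) is discontinuous in α at rationals p/q with q | q₀, and ε ↦ L(p/q, A_ε) is not piecewise linear there (no quantization at rationals). -/

import Mathlib

open Filter MeasureTheory Set

/-- Frobenius-type norm of a 2×2 complex matrix. -/
noncomputable def mnorm (B : Matrix (Fin 2) (Fin 2) ℂ) : ℝ :=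
  Real.sqrt (∑ i : Fin 2, ∑ j : Fin 2, ‖B i j‖ ^ 2)

/-- Euclidean norm of a vector in ℂ². -/
noncomputable def vnorm (w : Fin 2 → ℂ) : ℝ :=
  Real.sqrt (∑ i : Fin 2, ‖w i‖ ^ 2)

/-- The n-step cocycle product A(x+(n-1)α)⋯A(x+α)A(x). -/
noncomputable def cocycle (A : ℝ → Matrix (Fin 2) (Fin 2) ℂ) (α : ℝ) (n : ℕ) (x : ℝ) :
    Matrix (Fin 2) (Fin 2) ℂ :=
  (((List.range n).reverse).map (fun k => A (x + k * α))).prod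

/-- The Lyapunov exponent L(α,A) = lim (1/n) ∫ log‖A_n(x)‖ dx. -/
noncomputable def lyap (α : ℝ) (A : ℝ → Matrix (Fin 2) (Fin 2) ℂ) : ℝ :=
  Filter.limsup
    (fun n : ℕ => (n : ℝ)⁻¹ * ∫ x in (0:ℝ)..1, Real.log (mnorm (cocycle A α n x)))
    Filter.atTop

noncomputable def lamEx (q₀ : ℕ) (z : ℂ) : ℂ :=
  Complex.exp (2 * Real.pi * Complex.I * (q₀ : ℂ) * z)

/-- The diagonal example A(x) = diag(e^{λ(x)}, e^{-λ(x)}), λ(x) = e^{2πi q₀ x}. -/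
noncomputable def diagEx (q₀ : ℕ) (z : ℂ) : Matrix (Fin 2) (Fin 2) ℂ :=
  !![Complex.exp (lamEx q₀ z), 0; 0, Complex.exp (-lamEx q₀ z)]

open intervalIntegral

lemma diag_mul (a d a' d' : ℂ) : !![a,0;0,d] * !![a',0;0,d'] = !![a*a',0;0,d*d'] := by
  rw [Matrix.mul_fin_two]; ring_nf

lemma cocycle_succ (A : ℝ → Matrix (Fin 2) (Fin 2) ℂ) (α : ℝ) (n : ℕ) (x : ℝ) :
    cocycle A α (n+1) x = A (x + n * α) * cocycle A α n x := by
  simp [cocycle, List.range_succ]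

lemma cocycle_diag (q₀ : ℕ) (ε : ℝ) (α : ℝ) (n : ℕ) (x : ℝ) :
    cocycle (fun x : ℝ => diagEx q₀ (x + ε * Complex.I)) α n x =
      !![Complex.exp (∑ k ∈ Finset.range n, lamEx q₀ (x + k * α + ε * Complex.I)), 0; 0,
         Complex.exp (-(∑ k ∈ Finset.range n, lamEx q₀ (x + k * α + ε * Complex.I)))] := by
  induction n with
  | zero =>
    simp only [cocycle, List.range_zero, List.reverse_nil, List.map_nil, List.prod_nil,
      Finset.range_zero, Finset.sum_empty, neg_zero, Complex.exp_zero]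
    ext i j; fin_cases i <;> fin_cases j <;> simp [Matrix.one_apply]
  | succ n ih =>
    rw [cocycle_succ, ih]
    show diagEx q₀ (↑(x + n * α) + ε * Complex.I) * _ = _
    rw [diagEx, diag_mul, Finset.sum_range_succ, ← Complex.exp_add, ← Complex.exp_add]
    have : ((x : ℂ) + n * α + ε * Complex.I) = ((x + n * α : ℝ) : ℂ) + ε * Complex.I := by
      push_cast; ring
    rw [this, ← neg_add, add_comm (lamEx q₀ ((x + n * α : ℝ) + (ε : ℂ) * Complex.I))]

noncomputable def gfun (t : ℝ) : ℝ := (1/2) * Real.log (Real.exp (2*t) + Real.exp (-(2*t)))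

lemma log_mnorm_diag (z : ℂ) :
    Real.log (mnorm !![Complex.exp z, 0; 0, Complex.exp (-z)]) = gfun z.re := by
  have h1 : mnorm !![Complex.exp z, 0; 0, Complex.exp (-z)]
      = Real.sqrt (Real.exp (2*z.re) + Real.exp (-(2*z.re))) := by
    simp [mnorm, Fin.sum_univ_two, Complex.norm_exp, Complex.neg_re]
    rw [sq, sq, ← Real.exp_add, ← Real.exp_add]
    ring_nf
  rw [h1, Real.log_sqrt (by positivity), gfun]; ring

lemma gfun_lb (t : ℝ) : |t| ≤ gfun t := by
  have h1 : Real.exp (2*|t|) ≤ Real.exp (2*t) + Real.exp (-(2*t)) := by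
    rcases abs_cases t with ⟨h, _⟩ | ⟨h, _⟩
    · rw [h]; nlinarith [Real.exp_pos (-(2*t))]
    · rw [h]
      have he : Real.exp (2 * -t) = Real.exp (-(2*t)) := by ring_nf
      rw [he]; nlinarith [Real.exp_pos (2*t)]
  have := Real.log_le_log (Real.exp_pos _) h1
  rw [Real.log_exp] at this
  rw [gfun]; linarith

lemma gfun_ub (t : ℝ) : gfun t ≤ |t| + Real.log 2 / 2 := by
  have h1 : Real.exp (2*t) + Real.exp (-(2*t)) ≤ 2 * Real.exp (2*|t|) := by
    have h2 : Real.exp (2*t) ≤ Real.exp (2*|t|) :=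
      Real.exp_le_exp.2 (by nlinarith [le_abs_self t])
    have h3 : Real.exp (-(2*t)) ≤ Real.exp (2*|t|) :=
      Real.exp_le_exp.2 (by nlinarith [neg_abs_le t])
    linarith
  have := Real.log_le_log (by positivity) h1
  rw [Real.log_mul (by norm_num) (Real.exp_ne_zero _), Real.log_exp] at this
  rw [gfun]; linarith

lemma gfun_cont : Continuous gfun := by
  apply Continuous.mul continuous_const
  apply Continuous.log
  · fun_prop
  · intro x; positivity

lemma abscos_pi_int : ∫ x in (0:ℝ)..Real.pi, |Real.cos x| = 2 := by
  have h1 : ∫ x in (0:ℝ)..(Real.pi/2), |Real.cos x| = 1 := by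
    rw [integral_congr (g := Real.cos) ?_, integral_cos]
    · simp
    · intro x hx
      rw [uIcc_of_le (by positivity)] at hx
      exact abs_of_nonneg (Real.cos_nonneg_of_mem_Icc ⟨by linarith [hx.1, Real.pi_pos], hx.2⟩)
  have h2 : ∫ x in (Real.pi/2)..Real.pi, |Real.cos x| = 1 := by
    rw [integral_congr (g := fun x => -Real.cos x) ?_]
    · rw [intervalIntegral.integral_neg, integral_cos]; simp
    · intro x hx
      rw [uIcc_of_le (by linarith [Real.pi_pos])] at hx
      have : Real.cos x ≤ 0 := Real.cos_nonpos_of_pi_div_two_le_of_le hx.1 (by linarith [hx.2, Real.pi_pos])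
      simp [abs_of_nonpos this]
  have := integral_add_adjacent_intervals (a := (0:ℝ)) (b := Real.pi/2) (c := Real.pi)
    (f := fun x => |Real.cos x|) (μ := volume)
    ((Real.continuous_cos.abs).intervalIntegrable _ _)
    ((Real.continuous_cos.abs).intervalIntegrable _ _)
  rw [h1, h2] at this
  linarith

lemma abscos_int (m : ℕ) (hm : 0 < m) :
    ∫ x in (0:ℝ)..1, |Real.cos (2 * Real.pi * m * x)| = 2 / Real.pi := by
  have hc : (2 * Real.pi * m) ≠ 0 := by positivity
  rw [integral_comp_mul_left (fun u => |Real.cos u|) hc]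
  have hper : Function.Periodic (fun u => |Real.cos u|) Real.pi := by
    intro u; simp [Real.cos_add_pi]
  have hzs := hper.intervalIntegral_add_zsmul_eq (2*m) 0
    (fun t₁ t₂ => (Real.continuous_cos.abs).intervalIntegrable _ _)
  simp only [zero_add] at hzs
  have he : (2 * Real.pi * m * 1) = ((2*m : ℤ)) • Real.pi := by rw [zsmul_eq_mul]; push_cast; ring
  rw [mul_zero, he, hzs, abscos_pi_int, smul_eq_mul, zsmul_eq_mul]
  have hπ := Real.pi_pos
  have hm' : (m:ℝ) ≠ 0 := Nat.cast_ne_zero.2 hm.ne'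
  push_cast
  field_simp


lemma lamEx_shift (q₀ : ℕ) (ε α x : ℝ) (k : ℕ) :
    lamEx q₀ (x + k * α + ε * Complex.I)
      = lamEx q₀ (x + ε * Complex.I) * Complex.exp (2 * Real.pi * Complex.I * q₀ * α) ^ k := by
  rw [lamEx, lamEx, ← Complex.exp_nat_mul, ← Complex.exp_add]
  congr 1
  ring

lemma lamEx_abs (q₀ : ℕ) (ε x : ℝ) :
    ‖lamEx q₀ (x + ε * Complex.I)‖ = Real.exp (-(2 * Real.pi * q₀ * ε)) := by
  rw [lamEx, Complex.norm_exp]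
  congr 1
  have : (2 * (Real.pi:ℂ) * Complex.I * q₀ * (x + ε * Complex.I))
      = ((-(2 * Real.pi * q₀ * ε) : ℝ) : ℂ) + ((2 * Real.pi * q₀ * x : ℝ) : ℂ) * Complex.I := by
    push_cast; ring_nf; simp [Complex.I_sq]; ring
  rw [this]
  simp

lemma lamEx_re (q₀ : ℕ) (ε x : ℝ) :
    (lamEx q₀ (x + ε * Complex.I)).re
      = Real.exp (-(2 * Real.pi * q₀ * ε)) * Real.cos (2 * Real.pi * q₀ * x) := by
  rw [lamEx]
  have : (2 * (Real.pi:ℂ) * Complex.I * q₀ * (x + ε * Complex.I))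
      = ((-(2 * Real.pi * q₀ * ε) : ℝ) : ℂ) + ((2 * Real.pi * q₀ * x : ℝ) : ℂ) * Complex.I := by
    push_cast; ring_nf; simp [Complex.I_sq]; ring
  rw [this, Complex.exp_re]
  simp

lemma log_mnorm_cocycle (q₀ : ℕ) (ε α : ℝ) (n : ℕ) (x : ℝ) :
    Real.log (mnorm (cocycle (fun x : ℝ => diagEx q₀ (x + ε * Complex.I)) α n x))
      = gfun ((∑ k ∈ Finset.range n, lamEx q₀ (x + k * α + ε * Complex.I)).re) := by
  rw [cocycle_diag, log_mnorm_diag]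

/-- The bounded (non-resonant) case. -/
lemma lyap_zero (q₀ : ℕ) (ε α : ℝ)
    (hω : Complex.exp (2 * Real.pi * Complex.I * q₀ * α) ≠ 1) :
    lyap α (fun x : ℝ => diagEx q₀ (x + ε * Complex.I)) = 0 := by
  set ω := Complex.exp (2 * Real.pi * Complex.I * q₀ * α) with hωdef
  set C : ℝ := Real.exp (-(2 * Real.pi * q₀ * ε)) * (2 / ‖ω - 1‖) + Real.log 2 / 2
    with hC
  have hω1 : ‖ω - 1‖ ≠ 0 := by
    simp only [ne_eq, norm_eq_zero, sub_eq_zero]; exact hω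
  have hω1' : 0 < ‖ω - 1‖ := lt_of_le_of_ne (norm_nonneg _) (Ne.symm hω1)
  have habsω : ‖ω‖ = 1 := by
    rw [hωdef, Complex.norm_exp]
    have : (2 * (Real.pi:ℂ) * Complex.I * q₀ * α)
        = ((2 * Real.pi * q₀ * α : ℝ) : ℂ) * Complex.I := by push_cast; ring
    rw [this]; simp
  -- pointwise bound on the log
  have hbound : ∀ n : ℕ, ∀ x : ℝ,
      |Real.log (mnorm (cocycle (fun x : ℝ => diagEx q₀ (x + ε * Complex.I)) α n x))| ≤ C := by
    intro n x
    rw [log_mnorm_cocycle]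
    set S := ∑ k ∈ Finset.range n, lamEx q₀ (x + k * α + ε * Complex.I) with hS
    have hSabs : ‖S‖ ≤ Real.exp (-(2 * Real.pi * q₀ * ε)) * (2 / ‖ω - 1‖) := by
      have h1 : S = lamEx q₀ (x + ε * Complex.I) * ∑ k ∈ Finset.range n, ω ^ k := by
        rw [hS, Finset.mul_sum]
        exact Finset.sum_congr rfl fun k _ => lamEx_shift q₀ ε α x k
      have h2 : ∑ k ∈ Finset.range n, ω ^ k = (ω ^ n - 1) / (ω - 1) := geom_sum_eq hω n
      rw [h1, norm_mul, lamEx_abs, h2, norm_div]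
      gcongr
      calc ‖ω ^ n - 1‖ ≤ ‖ω ^ n‖ + ‖(1:ℂ)‖ :=
            norm_sub_le _ _
        _ ≤ 2 := by rw [norm_pow, habsω]; norm_num
    have hre : |S.re| ≤ Real.exp (-(2 * Real.pi * q₀ * ε)) * (2 / ‖ω - 1‖) :=
      le_trans (Complex.abs_re_le_norm S) hSabs
    have h3 := gfun_ub S.re
    have h4 := gfun_lb S.re
    rw [abs_of_nonneg (le_trans (abs_nonneg _) h4), hC]
    linarith
  -- the integral bound
  have hint : ∀ n : ℕ,
      |(n : ℝ)⁻¹ * ∫ x in (0:ℝ)..1,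
          Real.log (mnorm (cocycle (fun x : ℝ => diagEx q₀ (x + ε * Complex.I)) α n x))|
        ≤ C / n := by
    intro n
    rw [abs_mul, abs_inv, Nat.abs_cast, div_eq_inv_mul]
    gcongr _ * ?_
    have := intervalIntegral.norm_integral_le_of_norm_le_const (a := (0:ℝ)) (b := 1) (C := C)
      (f := fun x => Real.log (mnorm (cocycle (fun x : ℝ => diagEx q₀ (x + ε * Complex.I)) α n x)))
      (fun x _ => hbound n x)
    simpa using this
  have htend : Tendsto
      (fun n : ℕ => (n : ℝ)⁻¹ * ∫ x in (0:ℝ)..1,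
        Real.log (mnorm (cocycle (fun x : ℝ => diagEx q₀ (x + ε * Complex.I)) α n x)))
      atTop (nhds 0) := by
    apply squeeze_zero_norm hint
    exact tendsto_const_div_atTop_nhds_zero_nat C
  rw [lyap]
  exact htend.limsup_eq

/-- The resonant case. -/
lemma lyap_pos (q₀ : ℕ) (hq₀ : 0 < q₀) (ε α : ℝ)
    (hω : Complex.exp (2 * Real.pi * Complex.I * q₀ * α) = 1) :
    lyap α (fun x : ℝ => diagEx q₀ (x + ε * Complex.I))
      = (2 / Real.pi) * Real.exp (-(2 * Real.pi * q₀ * ε)) := by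
  have hπ := Real.pi_pos
  set r := Real.exp (-(2 * Real.pi * q₀ * ε)) with hr
  have hr0 : 0 < r := Real.exp_pos _
  set L : ℝ := (2 / Real.pi) * r with hL
  have hsum : ∀ n : ℕ, ∀ x : ℝ,
      (∑ k ∈ Finset.range n, lamEx q₀ (x + k * α + ε * Complex.I)).re
        = (n : ℝ) * (r * Real.cos (2 * Real.pi * q₀ * x)) := by
    intro n x
    have hc : ∀ k ∈ Finset.range n,
        lamEx q₀ (x + k * α + ε * Complex.I) = lamEx q₀ (x + ε * Complex.I) := by
      intro k _; rw [lamEx_shift, hω, one_pow, mul_one]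
    rw [Finset.sum_congr rfl hc, Finset.sum_const, Finset.card_range, nsmul_eq_mul]
    simp only [Complex.mul_re, Complex.natCast_re, Complex.natCast_im, zero_mul, sub_zero]
    rw [lamEx_re]
  have hcont : ∀ n : ℕ, Continuous (fun x : ℝ =>
      gfun ((n : ℝ) * (r * Real.cos (2 * Real.pi * q₀ * x)))) := by
    intro n; exact gfun_cont.comp (by fun_prop)
  have hcont2 : ∀ n : ℕ, Continuous (fun x : ℝ =>
      (n : ℝ) * (r * |Real.cos (2 * Real.pi * q₀ * x)|)) := by
    intro n; fun_prop
  have habs : ∫ x in (0:ℝ)..1, |Real.cos (2 * Real.pi * q₀ * x)| = 2 / Real.pi :=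
    abscos_int q₀ hq₀
  have habs2 : ∀ n : ℕ, ∫ x in (0:ℝ)..1, (n : ℝ) * (r * |Real.cos (2 * Real.pi * q₀ * x)|)
      = (n : ℝ) * (r * (2 / Real.pi)) := by
    intro n
    rw [intervalIntegral.integral_const_mul, intervalIntegral.integral_const_mul, habs]
  have hIeq : ∀ n : ℕ,
      (∫ x in (0:ℝ)..1,
        Real.log (mnorm (cocycle (fun x : ℝ => diagEx q₀ (x + ε * Complex.I)) α n x)))
      = ∫ x in (0:ℝ)..1, gfun ((n : ℝ) * (r * Real.cos (2 * Real.pi * q₀ * x))) := by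
    intro n
    apply intervalIntegral.integral_congr
    intro x _
    dsimp only
    rw [log_mnorm_cocycle, hsum]
  have hptabs : ∀ n : ℕ, ∀ x : ℝ,
      |(n : ℝ) * (r * Real.cos (2 * Real.pi * q₀ * x))|
        = (n : ℝ) * (r * |Real.cos (2 * Real.pi * q₀ * x)|) := by
    intro n x
    rw [abs_mul, abs_mul, abs_of_nonneg (n.cast_nonneg : (0:ℝ) ≤ n), abs_of_nonneg hr0.le]
  have hlow : ∀ n : ℕ, (n : ℝ) * (r * (2 / Real.pi))
      ≤ ∫ x in (0:ℝ)..1, gfun ((n : ℝ) * (r * Real.cos (2 * Real.pi * q₀ * x))) := by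
    intro n
    rw [← habs2 n]
    apply intervalIntegral.integral_mono_on (by norm_num)
      ((hcont2 n).intervalIntegrable _ _) ((hcont n).intervalIntegrable _ _)
    intro x _
    rw [← hptabs n x]
    exact gfun_lb _
  have hupp : ∀ n : ℕ,
      (∫ x in (0:ℝ)..1, gfun ((n : ℝ) * (r * Real.cos (2 * Real.pi * q₀ * x))))
        ≤ (n : ℝ) * (r * (2 / Real.pi)) + Real.log 2 / 2 := by
    intro n
    have : (n : ℝ) * (r * (2 / Real.pi)) + Real.log 2 / 2
        = ∫ x in (0:ℝ)..1, ((n : ℝ) * (r * |Real.cos (2 * Real.pi * q₀ * x)|) + Real.log 2 / 2) := by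
      rw [intervalIntegral.integral_add ((hcont2 n).intervalIntegrable _ _)
        (intervalIntegrable_const), habs2, intervalIntegral.integral_const]
      simp
    rw [this]
    apply intervalIntegral.integral_mono_on (by norm_num)
      ((hcont n).intervalIntegrable _ _)
      (((hcont2 n).add continuous_const).intervalIntegrable _ _)
    intro x _
    have := gfun_ub ((n : ℝ) * (r * Real.cos (2 * Real.pi * q₀ * x)))
    rw [hptabs n x] at this
    simp only [Pi.add_apply]
    linarith
  set a : ℕ → ℝ := fun n : ℕ => (n : ℝ)⁻¹ * ∫ x in (0:ℝ)..1,
      Real.log (mnorm (cocycle (fun x : ℝ => diagEx q₀ (x + ε * Complex.I)) α n x)) with ha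
  have hlow' : ∀ᶠ n : ℕ in atTop, L ≤ a n := by
    filter_upwards [eventually_ge_atTop 1] with n hn
    have hn0 : (0:ℝ) < (n:ℝ) := by positivity
    rw [ha]
    simp only
    rw [hIeq n]
    have := hlow n
    rw [le_inv_mul_iff₀ hn0]
    calc (n:ℝ) * L = (n : ℝ) * (r * (2 / Real.pi)) := by rw [hL]; ring
      _ ≤ _ := hlow n
  have hupp' : ∀ᶠ n : ℕ in atTop, a n ≤ L + (Real.log 2 / 2) * (n : ℝ)⁻¹ := by
    filter_upwards [eventually_ge_atTop 1] with n hn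
    have hn0 : (0:ℝ) < (n:ℝ) := by positivity
    rw [ha]
    simp only
    rw [hIeq n, inv_mul_le_iff₀ hn0]
    calc (∫ x in (0:ℝ)..1, gfun ((n : ℝ) * (r * Real.cos (2 * Real.pi * q₀ * x))))
        ≤ (n : ℝ) * (r * (2 / Real.pi)) + Real.log 2 / 2 := hupp n
      _ = (n:ℝ) * (L + Real.log 2 / 2 * (n:ℝ)⁻¹) := by
          rw [hL]; field_simp
  have htend : Tendsto a atTop (nhds L) := by
    apply tendsto_of_tendsto_of_tendsto_of_le_of_le' (g := fun _ : ℕ => L)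
      (h := fun n : ℕ => L + (Real.log 2 / 2) * (n : ℝ)⁻¹) tendsto_const_nhds ?_ hlow' hupp'
    have : Tendsto (fun n : ℕ => (Real.log 2 / 2) * (n : ℝ)⁻¹) atTop (nhds 0) := by
      simpa using (tendsto_inv_atTop_nhds_zero_nat (𝕜 := ℝ)).const_mul (Real.log 2 / 2)
    simpa using tendsto_const_nhds.add this
  rw [lyap]
  exact htend.limsup_eq

lemma two_pi_I_ne : (2 * (Real.pi:ℂ) * Complex.I) ≠ 0 := by
  simp [Real.pi_ne_zero, Complex.I_ne_zero]

lemma res_iff (q₀ : ℕ) (α : ℝ) :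
    Complex.exp (2 * Real.pi * Complex.I * q₀ * α) = 1 ↔ ∃ n : ℤ, (q₀ : ℝ) * α = n := by
  rw [Complex.exp_eq_one_iff]
  constructor
  · rintro ⟨n, h⟩
    refine ⟨n, ?_⟩
    have h2 : (2 * (Real.pi:ℂ) * Complex.I) * (((q₀ : ℝ) * α : ℝ) : ℂ)
        = (2 * (Real.pi:ℂ) * Complex.I) * (n : ℂ) := by
      push_cast at h ⊢; linear_combination h
    have h3 := mul_left_cancel₀ two_pi_I_ne h2
    exact_mod_cast h3
  · rintro ⟨n, h⟩
    refine ⟨n, ?_⟩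
    have hC : (((q₀ : ℝ) * α : ℝ) : ℂ) = ((n : ℝ) : ℂ) := by exact_mod_cast h
    push_cast at hC ⊢
    linear_combination (2 * (Real.pi:ℂ) * Complex.I) * hC

lemma res_of_dvd (q₀ : ℕ) (p : ℤ) (q : ℕ) (hq : 0 < q) (hdvd : q ∣ q₀) :
    Complex.exp (2 * Real.pi * Complex.I * q₀ * (((p : ℝ) / q : ℝ) : ℂ)) = 1 := by
  rw [res_iff]
  obtain ⟨m, rfl⟩ := hdvd
  refine ⟨(m : ℤ) * p, ?_⟩
  have hq' : (q : ℝ) ≠ 0 := Nat.cast_ne_zero.2 hq.ne'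
  push_cast
  field_simp

lemma not_res_of_not_dvd (q₀ : ℕ) (p : ℤ) (q : ℕ) (hq : 0 < q)
    (hco : Nat.Coprime p.natAbs q) (hndvd : ¬ q ∣ q₀) :
    Complex.exp (2 * Real.pi * Complex.I * q₀ * (((p : ℝ) / q : ℝ) : ℂ)) ≠ 1 := by
  rw [Ne, res_iff]
  rintro ⟨n, h⟩
  apply hndvd
  have hq' : (q : ℝ) ≠ 0 := Nat.cast_ne_zero.2 hq.ne'
  have hZ : (q₀ : ℤ) * p = n * q := by
    have : (q₀ : ℝ) * (p : ℝ) = (n : ℝ) * q := by field_simp at h; linarith [h]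
    exact_mod_cast this
  have hdvd : (q : ℤ) ∣ (q₀ : ℤ) * p := ⟨n, by linarith [hZ]⟩
  have hdvd2 : q ∣ q₀ * p.natAbs := by
    have := Int.natAbs_dvd_natAbs.2 hdvd
    simpa [Int.natAbs_mul] using this
  exact (Nat.Coprime.dvd_of_dvd_mul_right hco.symm hdvd2)

lemma not_res_of_irrational (q₀ : ℕ) (hq₀ : 0 < q₀) (α : ℝ) (hirr : Irrational α) :
    Complex.exp (2 * Real.pi * Complex.I * q₀ * (α : ℂ)) ≠ 1 := by
  rw [Ne, res_iff]
  rintro ⟨n, h⟩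
  apply hirr
  refine ⟨(n : ℚ) / (q₀ : ℚ), ?_⟩
  have hq' : (q₀ : ℝ) ≠ 0 := Nat.cast_ne_zero.2 hq₀.ne'
  push_cast
  field_simp
  linarith [h]

/-- For the diagonal example: L(p/q, A_ε) = (2/π)e^{-2π q₀ ε} when q ∣ q₀ (p/q in
lowest terms), and L(α, A_ε) = 0 for all other α, in particular for irrational α.
Hence (for ε > 0) α ↦ L(α, A_ε) is discontinuous at such rationals, and
ε ↦ L(p/q, A_ε) is not affine on any interval (no quantization at rationals). -/
theorem diagonal_example (q₀ : ℕ) (hq₀ : 0 < q₀) :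
    (∀ ε : ℝ, ∀ p : ℤ, ∀ q : ℕ, 0 < q → Nat.Coprime p.natAbs q →
      (q ∣ q₀ →
        lyap ((p : ℝ) / q) (fun x : ℝ => diagEx q₀ (x + ε * Complex.I))
          = (2 / Real.pi) * Real.exp (-(2 * Real.pi * q₀ * ε))) ∧
      (¬ q ∣ q₀ →
        lyap ((p : ℝ) / q) (fun x : ℝ => diagEx q₀ (x + ε * Complex.I)) = 0)) ∧
    (∀ ε : ℝ, ∀ α : ℝ, Irrational α →
      lyap α (fun x : ℝ => diagEx q₀ (x + ε * Complex.I)) = 0) ∧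
    (∀ ε : ℝ, 0 < ε → ∀ p : ℤ, ∀ q : ℕ, 0 < q → Nat.Coprime p.natAbs q → q ∣ q₀ →
      ¬ ContinuousAt
        (fun β : ℝ => lyap β (fun x : ℝ => diagEx q₀ (x + ε * Complex.I)))
        ((p : ℝ) / q)) ∧
    (∀ p : ℤ, ∀ q : ℕ, 0 < q → Nat.Coprime p.natAbs q → q ∣ q₀ →
      ∀ a b : ℝ, a < b →
        ¬ ∃ c s : ℝ, ∀ ε ∈ Set.Ioo a b,
          lyap ((p : ℝ) / q) (fun x : ℝ => diagEx q₀ (x + ε * Complex.I))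
            = c + s * ε) := by
  have hπ := Real.pi_pos
  have part1 : ∀ ε : ℝ, ∀ p : ℤ, ∀ q : ℕ, 0 < q → Nat.Coprime p.natAbs q →
      (q ∣ q₀ →
        lyap ((p : ℝ) / q) (fun x : ℝ => diagEx q₀ (x + ε * Complex.I))
          = (2 / Real.pi) * Real.exp (-(2 * Real.pi * q₀ * ε))) ∧
      (¬ q ∣ q₀ →
        lyap ((p : ℝ) / q) (fun x : ℝ => diagEx q₀ (x + ε * Complex.I)) = 0) := by
    intro ε p q hq hco
    exact ⟨fun hdvd => lyap_pos q₀ hq₀ ε _ (res_of_dvd q₀ p q hq hdvd),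
      fun hndvd => lyap_zero q₀ ε _ (not_res_of_not_dvd q₀ p q hq hco hndvd)⟩
  have part2 : ∀ ε : ℝ, ∀ α : ℝ, Irrational α →
      lyap α (fun x : ℝ => diagEx q₀ (x + ε * Complex.I)) = 0 := by
    intro ε α hirr
    exact lyap_zero q₀ ε α (not_res_of_irrational q₀ hq₀ α hirr)
  refine ⟨part1, part2, ?_, ?_⟩
  · -- discontinuity
    intro ε hε p q hq hco hdvd hcont
    set F := fun β : ℝ => lyap β (fun x : ℝ => diagEx q₀ (x + ε * Complex.I)) with hF
    have hseq : Tendsto (fun j : ℕ => (p : ℝ) / q + Real.sqrt 2 / ((j : ℝ) + 1)) atTop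
        (nhds ((p : ℝ) / q)) := by
      have h1 : Tendsto (fun j : ℕ => Real.sqrt 2 / ((j : ℝ) + 1)) atTop (nhds 0) := by
        have h2 := (tendsto_const_div_atTop_nhds_zero_nat (Real.sqrt 2)).comp
          (tendsto_add_atTop_nat 1)
        convert h2 using 2 with j
        simp [Function.comp]
      simpa using tendsto_const_nhds.add h1
    have hirrj : ∀ j : ℕ, Irrational ((p : ℝ) / q + Real.sqrt 2 / ((j : ℝ) + 1)) := by
      intro j
      have h2 : Irrational (Real.sqrt 2 / ((j + 1 : ℕ) : ℝ)) :=
        irrational_sqrt_two.div_natCast (Nat.succ_ne_zero j)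
      have h3 := h2.ratCast_add ((p : ℚ) / (q : ℚ))
      have hq' : (q : ℝ) ≠ 0 := Nat.cast_ne_zero.2 hq.ne'
      convert h3 using 2
      · push_cast; ring
      · push_cast; ring
    have h0 := (hcont.tendsto).comp hseq
    have hFz : (F ∘ fun j : ℕ => (p : ℝ) / q + Real.sqrt 2 / ((j : ℝ) + 1))
        = fun _ : ℕ => (0 : ℝ) :=
      funext fun j => part2 ε _ (hirrj j)
    rw [hFz] at h0
    have hFval : F ((p : ℝ) / q) = (2 / Real.pi) * Real.exp (-(2 * Real.pi * q₀ * ε)) :=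
      (part1 ε p q hq hco).1 hdvd
    have := tendsto_nhds_unique tendsto_const_nhds h0
    rw [hFval] at this
    have hpos : 0 < (2 / Real.pi) * Real.exp (-(2 * Real.pi * q₀ * ε)) := by positivity
    linarith
  · -- non-affine
    rintro p q hq hco hdvd a b hab ⟨c, s, h⟩
    have hπ' : Real.pi ≠ 0 := Real.pi_ne_zero
    have hd0 : 0 < (b - a) / 4 := by linarith
    set d := (b - a) / 4 with hd
    have h1 := h (a + d) ⟨by linarith, by linarith⟩
    have h2 := h (a + 2 * d) ⟨by linarith, by linarith⟩
    have h3 := h (a + 3 * d) ⟨by linarith, by linarith⟩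
    rw [(part1 (a + d) p q hq hco).1 hdvd] at h1
    rw [(part1 (a + 2 * d) p q hq hco).1 hdvd] at h2
    rw [(part1 (a + 3 * d) p q hq hco).1 hdvd] at h3
    set K := 2 * Real.pi * (q₀ : ℝ) with hK
    have hK0 : 0 < K := by
      have : (0:ℝ) < q₀ := Nat.cast_pos.2 hq₀
      positivity
    have hne : -(K * (a + d)) ≠ -(K * (a + 3 * d)) := by
      intro hcontra
      have : K * (2 * d) = 0 := by linarith [neg_injective hcontra]
      nlinarith
    have hconv := strictConvexOn_exp.2 (mem_univ (-(K * (a + d))))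
      (mem_univ (-(K * (a + 3 * d)))) hne
      (by norm_num : (0:ℝ) < 1/2) (by norm_num : (0:ℝ) < 1/2) (by norm_num)
    simp only [smul_eq_mul] at hconv
    have hmid : (1/2) * (-(K * (a + d))) + (1/2) * (-(K * (a + 3 * d)))
        = -(K * (a + 2 * d)) := by ring
    rw [hmid] at hconv
    have h1' : 2 * Real.exp (-(K * (a + d))) = Real.pi * (c + s * (a + d)) := by
      field_simp at h1; linear_combination h1
    have h2' : 2 * Real.exp (-(K * (a + 2 * d))) = Real.pi * (c + s * (a + 2 * d)) := by
      field_simp at h2; linear_combination h2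
    have h3' : 2 * Real.exp (-(K * (a + 3 * d))) = Real.pi * (c + s * (a + 3 * d)) := by
      field_simp at h3; linear_combination h3
    have hE : Real.exp (-(K * (a + 2 * d)))
        = (Real.exp (-(K * (a + d))) + Real.exp (-(K * (a + 3 * d)))) / 2 := by
      linear_combination (-(1:ℝ)/4) * h1' + (-(1:ℝ)/4) * h3' + ((1:ℝ)/2) * h2'
    rw [hE] at hconv
    linarith
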